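/- Let A be a Dedekind domain with fraction field F, and let G ∈ A[[X]] be a formal power series that is rational, i.e., G = p/q for some polynomials p, q ∈ A[X] with q ≠ 0. Then there exist polynomials P, Q ∈ A[X] with P and Q relatively prime in F[X] and Q(0) = 1, such that G = P/Q. -/

import Mathlib

open Polynomial IsDedekindDomain IsDedekindDomain.HeightOneSpectrum
open scoped Multiplicative

local notation "ℤₘ₀" => WithZero (Multiplicative ℤ)

theorem mul_lt_mul_of_lt_of_le₀ {a b c d : ℤₘ₀} (hab : a ≤ b) (hb : b ≠ 0) (hcd : c < d) :
    a * c < b * d := by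
  rcases eq_or_ne a 0 with rfl | ha
  · rw [zero_mul]
    exact zero_lt_iff.mpr (mul_ne_zero hb (ne_zero_of_lt hcd))
  · calc a * c < a * d := mul_lt_mul_of_pos_left hcd (zero_lt_iff.mpr ha)
      _ ≤ b * d := mul_le_mul_of_nonneg_right hab zero_le'

theorem fatou_mem_range
    (A : Type*) [CommRing A] [IsDomain A] [IsDedekindDomain A]
    (F : Type*) [Field F] [Algebra A F] [IsFractionRing A F]
    (x : F) (hx : ∀ w : HeightOneSpectrum A, w.valuation F x ≤ 1) :
    x ∈ (algebraMap A F).range := by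
  classical
  obtain ⟨⟨a, s⟩, rfl⟩ := IsLocalization.mk'_surjective (nonZeroDivisors A) x
  dsimp only at hx ⊢
  have hs0 : (s : A) ≠ 0 := nonZeroDivisors.coe_ne_zero s
  have hdvd : (s : A) ∣ a := by
    rcases eq_or_ne a 0 with rfl | ha0
    · exact dvd_zero _
    have hIa : (Ideal.span {a} : Ideal A) ≠ 0 := by
      simpa [Ideal.zero_eq_bot, Ideal.span_singleton_eq_bot] using ha0
    have hIs : (Ideal.span {(s : A)} : Ideal A) ≠ 0 := by
      simpa [Ideal.zero_eq_bot, Ideal.span_singleton_eq_bot] using hs0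
    have hspan : (Ideal.span {(s : A)} : Ideal A) ∣ Ideal.span {a} := by
      rw [UniqueFactorizationMonoid.dvd_iff_normalizedFactors_le_normalizedFactors hIs hIa,
        Multiset.le_iff_count]
      intro P
      by_cases hP : P ∈ UniqueFactorizationMonoid.normalizedFactors
          (Ideal.span {(s : A)} : Ideal A)
      swap
      · simp [Multiset.count_eq_zero_of_notMem hP]
      have hPprime : Prime P := UniqueFactorizationMonoid.prime_of_normalized_factor _ hP
      have hPbot : P ≠ ⊥ := hPprime.ne_zero
      set w : HeightOneSpectrum A := ⟨P, Ideal.isPrime_of_prime hPprime, hPbot⟩ with hw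
      have h1 := hx w
      rw [valuation_of_mk'] at h1
      have hpos : (0 : ℤₘ₀) < w.intValuation (s : A) := zero_lt_iff.mpr (w.intValuation_ne_zero' s)
      have h2 : w.intValuation a ≤ w.intValuation (s : A) := (div_le_one₀ hpos).mp h1
      rw [intValuation_apply, intValuation_apply, w.intValuationDef_if_neg ha0,
        w.intValuationDef_if_neg hs0, WithZero.exp_le_exp,
        neg_le_neg_iff, Nat.cast_le] at h2
      rwa [← Ideal.count_associates_factors_eq hIs (w.isPrime) hPbot,
        ← Ideal.count_associates_factors_eq hIa (w.isPrime) hPbot]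
    exact Ideal.span_singleton_le_span_singleton.mp (Ideal.le_of_dvd hspan)
  obtain ⟨t, ht⟩ := hdvd
  refine ⟨t, ?_⟩
  rw [IsLocalization.eq_mk'_iff_mul_eq, ← map_mul]
  congr 1
  rw [ht, mul_comm]

theorem zm0_le_of_lt {x c : ℤₘ₀} (hc : c ≠ 0) (h : x < c) :
    x ≤ c * ((Multiplicative.ofAdd (-1 : ℤ) : Multiplicative ℤ) : ℤₘ₀) := by
  rcases eq_or_ne x 0 with rfl | hx
  · exact zero_le'
  obtain ⟨u, rfl⟩ : ∃ u : Multiplicative ℤ, (u : ℤₘ₀) = x := ⟨WithZero.unzero hx, WithZero.coe_unzero hx⟩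
  obtain ⟨v, rfl⟩ : ∃ v : Multiplicative ℤ, (v : ℤₘ₀) = c := ⟨WithZero.unzero hc, WithZero.coe_unzero hc⟩
  rw [WithZero.coe_lt_coe] at h
  rw [← WithZero.coe_mul, WithZero.coe_le_coe]
  have h' : Multiplicative.toAdd u < Multiplicative.toAdd v := h
  have : Multiplicative.toAdd u ≤ Multiplicative.toAdd (v * Multiplicative.ofAdd (-1 : ℤ)) := by
    rw [toAdd_mul, toAdd_ofAdd]; omega
  exact this

theorem fatou_val_le_one {F : Type*} [Field F] (val : Valuation F ℤₘ₀)
    (Q : Polynomial F) (R : PowerSeries F)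
    (hQR : (Q : PowerSeries F) * R = 1)
    (hQ0 : Q.coeff 0 = 1)
    (D : F) (hD : val D ≠ 0)
    (hbound : ∀ n, val (PowerSeries.coeff n R) ≤ (val D)⁻¹) :
    ∀ i, val (Q.coeff i) ≤ 1 := by
  by_contra hcon
  push_neg at hcon
  obtain ⟨iw, hiw⟩ := hcon
  have hQne : Q ≠ 0 := fun h => by simp [h] at hQ0
  set α := Q.support.sup (fun i => val (Q.coeff i)) with hα_def
  have hle : ∀ i, val (Q.coeff i) ≤ α := by
    intro i
    by_cases hi : i ∈ Q.support
    · exact Finset.le_sup (f := fun i => val (Q.coeff i)) hi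
    · rw [Polynomial.notMem_support_iff.mp hi, map_zero]
      exact zero_le'
  have hα : 1 < α := lt_of_lt_of_le hiw (hle iw)
  have hαne : α ≠ 0 := (zero_lt_one.trans hα).ne'
  haveI : DecidablePred (fun i => val (Q.coeff i) = α) := fun _ => Classical.propDecidable _
  have hex : ∃ i, val (Q.coeff i) = α := by
    obtain ⟨i, _, h⟩ := Finset.exists_mem_eq_sup Q.support
      (Polynomial.support_nonempty.mpr hQne) (fun i => val (Q.coeff i))
    exact ⟨i, h.symm⟩
  set i₀ := Nat.find hex with hi₀_def
  have hi₀ : val (Q.coeff i₀) = α := Nat.find_spec hex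
  have hmin : ∀ i < i₀, val (Q.coeff i) ≠ α := fun i hi => Nat.find_min hex hi
  have hi₀ne0 : i₀ ≠ 0 := by
    intro h
    rw [h, hQ0, map_one] at hi₀
    exact hα.ne hi₀
  -- descent step
  have step : ∀ c : ℤₘ₀, c ≠ 0 → (∀ n, val (PowerSeries.coeff n R) ≤ c) →
      ∀ n, val (PowerSeries.coeff n R) < c := by
    intro c hc hcle n
    induction n using Nat.strong_induction_on with
    | _ n ih =>
    refine lt_of_le_of_ne (hcle n) ?_
    intro heq
    have hjmem : (i₀, n) ∈ Finset.HasAntidiagonal.antidiagonal (i₀ + n) := by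
      simp [Finset.HasAntidiagonal.mem_antidiagonal]
    have hfj : val (PowerSeries.coeff (i₀, n).1 (Q : PowerSeries F) *
        PowerSeries.coeff (i₀, n).2 R) = α * c := by
      rw [map_mul, Polynomial.coeff_coe, hi₀, heq]
    have hsum := Valuation.map_sum_eq_of_lt val (s := Finset.HasAntidiagonal.antidiagonal (i₀ + n))
      (f := fun p => PowerSeries.coeff p.1 (Q : PowerSeries F) * PowerSeries.coeff p.2 R)
      (j := (i₀, n)) hjmem (by
        intro p hp
        simp only [Finset.mem_sdiff, Finset.mem_singleton, Finset.HasAntidiagonal.mem_antidiagonal] at hp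
        obtain ⟨hpmem, hpne⟩ := hp
        rw [hfj, map_mul, Polynomial.coeff_coe]
        rcases lt_trichotomy p.1 i₀ with h1 | h1 | h1
        · have hq : val (Q.coeff p.1) < α := lt_of_le_of_ne (hle p.1) (hmin p.1 h1)
          have h3 := mul_lt_mul_of_lt_of_le₀ (hcle p.2) hc hq
          rw [mul_comm c α] at h3
          rw [mul_comm (val (Q.coeff p.1))]
          exact h3
        · exfalso
          apply hpne
          have h2 : p.2 = n := by omega
          rw [Prod.ext_iff]
          exact ⟨h1, h2⟩
        · have h2 : p.2 < n := by omega
          exact mul_lt_mul_of_lt_of_le₀ (hle p.1) hαne (ih p.2 h2))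
    have key : val (PowerSeries.coeff (i₀ + n) ((Q : PowerSeries F) * R)) = α * c := by
      rw [PowerSeries.coeff_mul]
      rw [hsum]
      exact hfj
    rw [hQR] at key
    have h1 : (PowerSeries.coeff (i₀ + n)) (1 : PowerSeries F) = 0 := by
      rw [PowerSeries.coeff_one]
      simp [hi₀ne0]
    rw [h1, map_zero] at key
    exact (mul_ne_zero hαne hc) key.symm
  -- iterate
  have descent : ∀ m : ℕ, ∀ n, val (PowerSeries.coeff n R) ≤
      (val D)⁻¹ * ((Multiplicative.ofAdd (-1 : ℤ) : Multiplicative ℤ) : ℤₘ₀) ^ m := by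
    intro m
    induction m with
    | zero => simpa using hbound
    | succ m ih =>
      have hcne : (val D)⁻¹ * ((Multiplicative.ofAdd (-1 : ℤ) : Multiplicative ℤ) : ℤₘ₀) ^ m ≠ 0 := by
        apply mul_ne_zero
        · simpa using hD
        · exact pow_ne_zero _ WithZero.coe_ne_zero
      intro n
      have hlt := step _ hcne ih n
      have := zm0_le_of_lt hcne hlt
      calc val (PowerSeries.coeff n R) ≤ _ := this
        _ = (val D)⁻¹ * ((Multiplicative.ofAdd (-1 : ℤ) : Multiplicative ℤ) : ℤₘ₀) ^ (m + 1) := by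
          rw [pow_succ, mul_assoc]
  -- contradiction at n = 0
  have hR0 : val (PowerSeries.coeff 0 R) = 1 := by
    have h := congrArg (PowerSeries.constantCoeff) hQR
    rw [map_mul, map_one, Polynomial.constantCoeff_coe, hQ0, one_mul] at h
    rw [PowerSeries.coeff_zero_eq_constantCoeff, h, map_one]
  obtain ⟨d, hd⟩ : ∃ d : Multiplicative ℤ, (d : ℤₘ₀) = val D := ⟨WithZero.unzero hD, WithZero.coe_unzero hD⟩
  set m := (- Multiplicative.toAdd d).toNat + 1 with hm_def
  have hcontra := descent m 0
  rw [hR0] at hcontra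
  rw [← hd] at hcontra
  rw [← WithZero.coe_inv, ← WithZero.coe_pow, ← WithZero.coe_mul, ← WithZero.coe_one,
    WithZero.coe_le_coe] at hcontra
  have : (0 : ℤ) ≤ Multiplicative.toAdd (d⁻¹ * Multiplicative.ofAdd (-1 : ℤ) ^ m) := hcontra
  simp only [toAdd_mul, toAdd_inv, toAdd_pow, toAdd_ofAdd, smul_eq_mul, nsmul_eq_mul] at this
  omega

section
variable {A : Type*} [CommRing A] {F : Type*} [CommRing F]

theorem coe_map_powerSeries (φ : A →+* F) (r : Polynomial A) :
    ((r.map φ : Polynomial F) : PowerSeries F) = PowerSeries.map φ (r : PowerSeries A) := by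
  ext n
  simp [Polynomial.coeff_coe, PowerSeries.coeff_map, Polynomial.coeff_map]
end

theorem step1
    (A : Type*) [CommRing A] [IsDomain A]
    (G : PowerSeries A)
    (hrat : ∃ p q : Polynomial A, q ≠ 0 ∧ (q : PowerSeries A) * G = (p : PowerSeries A)) :
    ∃ p q : Polynomial A, q.coeff 0 ≠ 0 ∧ (q : PowerSeries A) * G = (p : PowerSeries A) := by
  obtain ⟨p, q, hq, hpq⟩ := hrat
  obtain ⟨q₁, hq_eq, hndvd⟩ := q.exists_eq_pow_rootMultiplicity_mul_and_not_dvd hq 0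
  rw [map_zero, sub_zero] at hq_eq hndvd
  set n := q.rootMultiplicity 0 with hn
  have hq10 : q₁.coeff 0 ≠ 0 := fun h => hndvd (Polynomial.X_dvd_iff.mpr h)
  have hqc : (q : PowerSeries A) = (PowerSeries.X : PowerSeries A) ^ n * (q₁ : PowerSeries A) := by
    rw [hq_eq, Polynomial.coe_mul, Polynomial.coe_pow, Polynomial.coe_X]
  have hdvd : (PowerSeries.X : PowerSeries A) ^ n ∣ (p : PowerSeries A) := by
    refine ⟨(q₁ : PowerSeries A) * G, ?_⟩
    rw [← hpq, hqc]; ring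
  have hdvd' : (X : Polynomial A) ^ n ∣ p := by
    rw [Polynomial.X_pow_dvd_iff]
    intro d hd
    have := PowerSeries.X_pow_dvd_iff.mp hdvd d hd
    rwa [Polynomial.coeff_coe] at this
  obtain ⟨p₁, hp_eq⟩ := hdvd'
  refine ⟨p₁, q₁, hq10, ?_⟩
  have hX : (PowerSeries.X : PowerSeries A) ^ n ≠ 0 := pow_ne_zero _ PowerSeries.X_ne_zero
  apply mul_left_cancel₀ hX
  rw [← mul_assoc, ← hqc, hpq, hp_eq, Polynomial.coe_mul, Polynomial.coe_pow, Polynomial.coe_X]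

/-- Generalized Fatou lemma over a Dedekind domain. -/
theorem generalized_fatou
    (A : Type*) [CommRing A] [IsDomain A] [IsDedekindDomain A]
    (F : Type*) [Field F] [Algebra A F] [IsFractionRing A F]
    (G : PowerSeries A)
    (hrat : ∃ p q : Polynomial A, q ≠ 0 ∧ (q : PowerSeries A) * G = (p : PowerSeries A)) :
    ∃ P Q : Polynomial A,
      IsCoprime (P.map (algebraMap A F)) (Q.map (algebraMap A F)) ∧
      Q.coeff 0 = 1 ∧
      (Q : PowerSeries A) * G = (P : PowerSeries A) := by
  letI : DecidableEq (Polynomial F) := Classical.decEq _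
  letI : GCDMonoid (Polynomial F) := EuclideanDomain.gcdMonoid _
  obtain ⟨p₁, q₁, hq₁0, hpq₁⟩ := step1 A G hrat
  set φ := algebraMap A F with hφ
  have hinj : Function.Injective φ := IsFractionRing.injective A F
  set Gh := PowerSeries.map φ G with hGh
  -- map the relation to F
  have hpq₂ : ((q₁.map φ : Polynomial F) : PowerSeries F) * Gh
      = ((p₁.map φ : Polynomial F) : PowerSeries F) := by
    rw [coe_map_powerSeries, coe_map_powerSeries, hGh, ← map_mul, hpq₁]
  set ph := p₁.map φ with hph
  set qh := q₁.map φ with hqh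
  have hqh0 : qh.coeff 0 ≠ 0 := by
    rw [hqh, Polynomial.coeff_map]
    simpa using fun h => hq₁0 (hinj (by simpa using h))
  have hqhne : qh ≠ 0 := fun h => hqh0 (by rw [h]; simp)
  -- divide by the gcd
  set d := GCDMonoid.gcd ph qh with hd_def
  have hd : d ≠ 0 := fun h => hqhne ((gcd_eq_zero_iff ph qh).mp h).2
  set P₀ := ph / d with hP₀
  set Q₀ := qh / d with hQ₀
  have hqd : d * Q₀ = qh := EuclideanDomain.mul_div_cancel' hd (gcd_dvd_right ph qh)
  have hpd : d * P₀ = ph := EuclideanDomain.mul_div_cancel' hd (gcd_dvd_left ph qh)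
  have hcop : IsCoprime P₀ Q₀ := isCoprime_div_gcd_div_gcd hqhne
  have hQ₀0 : Q₀.coeff 0 ≠ 0 := by
    intro h
    apply hqh0
    rw [← hqd, Polynomial.mul_coeff_zero, h, mul_zero]
  have hps : (Q₀ : PowerSeries F) * Gh = (P₀ : PowerSeries F) := by
    have hdne : ((d : Polynomial F) : PowerSeries F) ≠ 0 := fun h =>
      hd (Polynomial.coe_eq_zero_iff.mp h)
    apply mul_left_cancel₀ hdne
    rw [← mul_assoc, ← Polynomial.coe_mul, hqd, hpq₂, ← hpd, Polynomial.coe_mul]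
  -- normalize the constant coefficient
  set c := (Q₀.coeff 0)⁻¹ with hc
  have hcne : c ≠ 0 := inv_ne_zero hQ₀0
  set Q := C c * Q₀ with hQ_def
  set P := C c * P₀ with hP_def
  have hQ0 : Q.coeff 0 = 1 := by
    rw [hQ_def, Polynomial.mul_coeff_zero, Polynomial.coeff_C_zero, hc,
      inv_mul_cancel₀ hQ₀0]
  have hcop2 : IsCoprime P Q := by
    rw [hP_def, hQ_def]
    exact (isCoprime_mul_unit_left (isUnit_C.mpr (isUnit_iff_ne_zero.mpr hcne)) _ _).mpr hcop
  have hPS : (Q : PowerSeries F) * Gh = (P : PowerSeries F) := by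
    rw [hQ_def, hP_def, Polynomial.coe_mul, Polynomial.coe_mul, mul_assoc, hps]
  -- the inverse of Q
  obtain ⟨u, v, huv⟩ := id hcop2
  set R := (u : PowerSeries F) * Gh + (v : PowerSeries F) with hR
  have hQR : (Q : PowerSeries F) * R = 1 := by
    have h1 : (Q : PowerSeries F) * R = ((u * P + v * Q : Polynomial F) : PowerSeries F) := by
      rw [hR]
      simp only [Polynomial.coe_add, Polynomial.coe_mul]
      rw [← hPS]
      ring
    rw [h1, huv, Polynomial.coe_one]
  -- common denominator for u and v
  obtain ⟨Du, hDu⟩ := IsLocalization.exist_integer_multiples (nonZeroDivisors A) u.support u.coeff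
  obtain ⟨Dv, hDv⟩ := IsLocalization.exist_integer_multiples (nonZeroDivisors A) v.support v.coeff
  have hDne : (Du : A) * (Dv : A) ≠ 0 :=
    mul_ne_zero (nonZeroDivisors.coe_ne_zero Du) (nonZeroDivisors.coe_ne_zero Dv)
  have hu_int : ∀ i, φ (Du : A) * u.coeff i ∈ (algebraMap A F).range := by
    intro i
    by_cases hi : i ∈ u.support
    · obtain ⟨b, hb⟩ := hDu i hi
      exact ⟨b, by rw [hb, Algebra.smul_def]⟩
    · rw [Polynomial.notMem_support_iff.mp hi, mul_zero]
      exact Subring.zero_mem _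
  have hv_int : ∀ i, φ (Dv : A) * v.coeff i ∈ (algebraMap A F).range := by
    intro i
    by_cases hi : i ∈ v.support
    · obtain ⟨b, hb⟩ := hDv i hi
      exact ⟨b, by rw [hb, Algebra.smul_def]⟩
    · rw [Polynomial.notMem_support_iff.mp hi, mul_zero]
      exact Subring.zero_mem _
  have hG_int : ∀ n, PowerSeries.coeff n Gh ∈ (algebraMap A F).range := by
    intro n
    rw [hGh, PowerSeries.coeff_map]
    exact ⟨PowerSeries.coeff n G, rfl⟩
  have hDR : ∀ n, φ ((Du : A) * (Dv : A)) * PowerSeries.coeff n R ∈ (algebraMap A F).range := by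
    intro n
    have hsplit : PowerSeries.coeff n R
        = PowerSeries.coeff n ((u : PowerSeries F) * Gh) + v.coeff n := by
      rw [hR, map_add, Polynomial.coeff_coe]
    rw [hsplit, mul_add, map_mul]
    apply Subring.add_mem
    · rw [PowerSeries.coeff_mul, Finset.mul_sum]
      apply Subring.sum_mem
      intro x hx
      rw [Polynomial.coeff_coe]
      have h2 : φ (Du:A) * φ (Dv:A) * (u.coeff x.1 * PowerSeries.coeff x.2 Gh)
          = (φ (Dv:A)) * ((φ (Du:A) * u.coeff x.1) * PowerSeries.coeff x.2 Gh) := by ring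
      rw [h2]
      exact Subring.mul_mem _ ⟨(Dv : A), rfl⟩
        (Subring.mul_mem _ (hu_int x.1) (hG_int x.2))
    · have h2 : φ (Du:A) * φ (Dv:A) * v.coeff n = φ (Du:A) * (φ (Dv:A) * v.coeff n) := by ring
      rw [h2]
      exact Subring.mul_mem _ ⟨(Du : A), rfl⟩ (hv_int n)
  -- apply the valuation bound at every height one prime
  have hQint : ∀ i, Q.coeff i ∈ (algebraMap A F).range := by
    intro i
    apply fatou_mem_range A F
    intro w
    refine fatou_val_le_one (w.valuation F) Q R hQR hQ0 (φ ((Du : A) * (Dv : A))) ?_ ?_ i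
    · rw [Valuation.ne_zero_iff]
      exact fun h => hDne (hinj (by rw [h, map_zero]))
    · intro n
      have h1 : w.valuation F (φ ((Du : A) * (Dv : A)) * PowerSeries.coeff n R) ≤ 1 := by
        obtain ⟨b, hb⟩ := hDR n
        rw [← hb]
        exact w.valuation_le_one b
      have hDval : w.valuation F (φ ((Du : A) * (Dv : A))) ≠ 0 := by
        rw [Valuation.ne_zero_iff]
        exact fun h => hDne (hinj (by rw [h, map_zero]))
      rw [map_mul] at h1
      calc w.valuation F (PowerSeries.coeff n R)
          = (w.valuation F (φ ((Du : A) * (Dv : A))))⁻¹ * (w.valuation F (φ ((Du : A) * (Dv : A))) * w.valuation F (PowerSeries.coeff n R)) := by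
            rw [← mul_assoc, inv_mul_cancel₀ hDval, one_mul]
        _ ≤ (w.valuation F (φ ((Du : A) * (Dv : A))))⁻¹ * 1 := by
            exact mul_le_mul_right h1 _
        _ = (w.valuation F (φ ((Du : A) * (Dv : A))))⁻¹ := mul_one _
  have hPint : ∀ i, P.coeff i ∈ (algebraMap A F).range := by
    intro i
    have : P.coeff i = PowerSeries.coeff i ((Q : PowerSeries F) * Gh) := by
      rw [hPS, Polynomial.coeff_coe]
    rw [this, PowerSeries.coeff_mul]
    apply Subring.sum_mem
    intro x hx
    rw [Polynomial.coeff_coe]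
    exact Subring.mul_mem _ (hQint x.1) (hG_int x.2)
  -- lift P and Q to A
  obtain ⟨qA, hqA⟩ := (Polynomial.mem_lifts Q).mp
    ((Polynomial.lifts_iff_coeff_lifts Q).mpr (fun n => by
      obtain ⟨b, hb⟩ := hQint n; exact ⟨b, hb⟩))
  obtain ⟨pA, hpA⟩ := (Polynomial.mem_lifts P).mp
    ((Polynomial.lifts_iff_coeff_lifts P).mpr (fun n => by
      obtain ⟨b, hb⟩ := hPint n; exact ⟨b, hb⟩))
  refine ⟨pA, qA, ?_, ?_, ?_⟩
  · rw [hpA, hqA]; exact hcop2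
  · have h2 := congrArg (fun r => Polynomial.coeff r 0) hqA
    simp only [Polynomial.coeff_map] at h2
    apply hinj
    rw [map_one]
    exact h2.trans hQ0
  · have hmapinj : Function.Injective (PowerSeries.map φ) := by
      intro f g h
      ext n
      apply hinj
      have := congrArg (PowerSeries.coeff n) h
      simpa [PowerSeries.coeff_map] using this
    apply hmapinj
    rw [map_mul, ← coe_map_powerSeries, ← coe_map_powerSeries, hqA, hpA, ← hGh, hPS]
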